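/- arXiv:1906.09613 — 5 statements merged into one kernel-verified Lean document; each statement's English description precedes it below -/
import Mathlib

section
/- Let f, g : [0,1]^K → ℝ with f being L_f-Lipschitz (with respect to the Euclidean norm), and suppose there exists y ∈ [0,1]^K with g(y) ≤ 0. For G > 0 define h(x) = f(x) + G·max(0, g(x)). Then for every x' ∈ [0,1]^K and α > 0 with h(x') ≤ min_{x ∈ [0,1]^K} h(x) + α, we have (1) f(x') ≤ min_{x ∈ [0,1]^K : g(x) ≤ 0} f(x) + α, and (2) g(x') ≤ (α + L_f·√K)/G. -/
open RealInnerProductSpace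

/-- Lemma: joint optimization of a composed objective. If `h = f + G·max(0,g)` is
nearly minimized at `x'` over the cube, then `x'` nearly minimizes `f` over the
feasible set and nearly satisfies the constraint `g`. -/
theorem stmt_0 (K : ℕ) (hK : 0 < K)
    (f g : EuclideanSpace ℝ (Fin K) → ℝ) (Lf G α : ℝ)
    (cube : Set (EuclideanSpace ℝ (Fin K)))
    (hcube : cube = {x | ∀ i, x i ∈ Set.Icc (0:ℝ) 1})
    (hfc : ContinuousOn f cube) (hgc : ContinuousOn g cube)
    (hLip : ∀ x ∈ cube, ∀ y ∈ cube, |f x - f y| ≤ Lf * ‖x - y‖)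
    (hfeas : ∃ y ∈ cube, g y ≤ 0)
    (hG : 0 < G) (hα : 0 < α)
    (h : EuclideanSpace ℝ (Fin K) → ℝ)
    (hh : ∀ x, h x = f x + G * max 0 (g x))
    (x' : EuclideanSpace ℝ (Fin K)) (hx' : x' ∈ cube)
    (hopt : ∀ x ∈ cube, h x' ≤ h x + α) :
    (∀ x ∈ cube, g x ≤ 0 → f x' ≤ f x + α) ∧
      g x' ≤ (α + Lf * Real.sqrt K) / G := by
  have hfx' : f x' ≤ h x' := by
    rw [hh]
    nlinarith [le_max_left 0 (g x'), hG.le]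
  constructor
  · intro x hx hgx
    have h1 := hopt x hx
    rw [hh x, max_eq_left hgx] at h1
    linarith
  · obtain ⟨y, hy, hgy⟩ := hfeas
    have hsqK : 0 < Real.sqrt K := Real.sqrt_pos.mpr (by exact_mod_cast hK)
    -- distance between any two points of the cube is at most √K
    have hdist : ∀ a ∈ cube, ∀ b ∈ cube, ‖a - b‖ ≤ Real.sqrt K := by
      intro a ha b hb
      rw [EuclideanSpace.norm_eq]
      apply Real.sqrt_le_sqrt
      calc ∑ i, ‖(a - b) i‖ ^ 2 ≤ ∑ _i : Fin K, (1:ℝ) := by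
            apply Finset.sum_le_sum
            intro i _
            have ha' := (hcube ▸ ha) i
            have hb' := (hcube ▸ hb) i
            simp only [PiLp.sub_apply, Real.norm_eq_abs, sq_abs]
            simp only [Set.mem_Icc] at ha' hb'
            nlinarith [ha'.1, ha'.2, hb'.1, hb'.2]
        _ = (K : ℝ) := by simp
    -- Lf is nonnegative
    have hLf0 : 0 ≤ Lf := by
      set a : EuclideanSpace ℝ (Fin K) := 0 with ha_def
      set b : EuclideanSpace ℝ (Fin K) := WithLp.toLp 2 (fun _ => 1) with hb_def
      have ha : a ∈ cube := by
        rw [hcube]; intro i; simp [ha_def]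
      have hb : b ∈ cube := by
        rw [hcube]; intro i; simp [hb_def]
      have hlip := hLip a ha b hb
      have hnb : ‖a - b‖ = Real.sqrt K := by
        rw [EuclideanSpace.norm_eq]
        congr 1
        calc ∑ i, ‖(a - b) i‖ ^ 2 = ∑ _i : Fin K, (1:ℝ) := by
              apply Finset.sum_congr rfl
              intro i _
              simp [ha_def, hb_def, PiLp.sub_apply]
          _ = (K : ℝ) := by simp
      rw [hnb] at hlip
      nlinarith [abs_nonneg (f a - f b)]
    have h1 := hopt y hy
    rw [hh x', hh y, max_eq_left hgy] at h1
    have hlip := hLip y hy x' hx'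
    have hfyx : f y - f x' ≤ Lf * Real.sqrt K := by
      have h2 : f y - f x' ≤ Lf * ‖y - x'‖ := le_trans (le_abs_self _) hlip
      have h3 : Lf * ‖y - x'‖ ≤ Lf * Real.sqrt K :=
        mul_le_mul_of_nonneg_left (hdist y hy x' hx') hLf0
      linarith
    have hmax : G * max 0 (g x') ≤ α + Lf * Real.sqrt K := by linarith
    have hgx' : g x' ≤ max 0 (g x') := le_max_right _ _
    calc g x' ≤ max 0 (g x') := hgx'
      _ ≤ G⁻¹ * (α + Lf * Real.sqrt K) := by
          rw [le_inv_mul_iff₀ hG]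
          exact hmax
      _ = (α + Lf * Real.sqrt K) / G := by rw [div_eq_inv_mul]
end

section
/- Let f, g : [0,1]^K → ℝ with f being L_f-Lipschitz, and suppose there exists y ∈ [0,1]^K with g(y) ≤ 0. For α > 0, define h(x) = f(x) + ((α + L_f·√K)/α)·max(0, g(x)). Then for every x' ∈ [0,1]^K with h(x') ≤ min_{x ∈ [0,1]^K} h(x) + α, we have f(x') ≤ min_{x ∈ [0,1]^K : g(x) ≤ 0} f(x) + α and g(x') ≤ α. -/
/-- Corollary: with `G = (α + L_f·√K)/α`, a near-minimizer of
`h = f + G·max(0,g)` over the cube nearly minimizes `f` over the feasible set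
and satisfies `g(x') ≤ α`. -/
theorem stmt_1 (K : ℕ) (hK : 0 < K)
    (f g : EuclideanSpace ℝ (Fin K) → ℝ) (Lf α : ℝ)
    (cube : Set (EuclideanSpace ℝ (Fin K)))
    (hcube : cube = {x | ∀ i, x i ∈ Set.Icc (0:ℝ) 1})
    (hfc : ContinuousOn f cube) (hgc : ContinuousOn g cube)
    (hLip : ∀ x ∈ cube, ∀ y ∈ cube, |f x - f y| ≤ Lf * ‖x - y‖)
    (hfeas : ∃ y ∈ cube, g y ≤ 0)
    (hα : 0 < α)
    (h : EuclideanSpace ℝ (Fin K) → ℝ)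
    (hh : ∀ x, h x = f x + ((α + Lf * Real.sqrt K) / α) * max 0 (g x))
    (x' : EuclideanSpace ℝ (Fin K)) (hx' : x' ∈ cube)
    (hopt : ∀ x ∈ cube, h x' ≤ h x + α) :
    (∀ x ∈ cube, g x ≤ 0 → f x' ≤ f x + α) ∧ g x' ≤ α := by
  have hsqrtK : (0:ℝ) < Real.sqrt K := Real.sqrt_pos.mpr (by exact_mod_cast hK)
  -- Lf is nonnegative
  have hLf : 0 ≤ Lf := by
    have ha : (0 : EuclideanSpace ℝ (Fin K)) ∈ cube := by
      simp [hcube]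
    obtain ⟨b, hbdef⟩ : ∃ b : EuclideanSpace ℝ (Fin K), ∀ i, b i = 1 :=
      ⟨WithLp.toLp 2 (fun _ => 1), fun _ => rfl⟩
    have hb : b ∈ cube := by
      rw [hcube]; exact fun i => ⟨by rw [hbdef i]; exact zero_le_one, le_of_eq (hbdef i)⟩
    have hnorm : ‖(0 : EuclideanSpace ℝ (Fin K)) - b‖ = Real.sqrt K := by
      rw [EuclideanSpace.norm_eq]
      congr 1
      have : ∀ i : Fin K, ‖((0 : EuclideanSpace ℝ (Fin K)) - b) i‖ ^ 2 = 1 := by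
        intro i
        have : ((0 : EuclideanSpace ℝ (Fin K)) - b) i = 0 - b i := rfl
        rw [this, hbdef i]
        norm_num
      rw [Finset.sum_congr rfl fun i _ => this i]
      simp
    have h1 := hLip _ ha _ hb
    rw [hnorm] at h1
    nlinarith [abs_nonneg (f (0 : EuclideanSpace ℝ (Fin K)) - f b)]
  -- diameter bound
  have hdiam : ∀ x ∈ cube, ∀ y ∈ cube, ‖x - y‖ ≤ Real.sqrt K := by
    intro x hx y hy
    rw [hcube] at hx hy
    rw [EuclideanSpace.norm_eq]
    have hb : ∀ i : Fin K, ‖(x - y) i‖ ^ 2 ≤ 1 := by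
      intro i
      have hxi := hx i
      have hyi := hy i
      simp only [Set.mem_Icc] at hxi hyi
      have : |(x - y) i| ≤ 1 := by
        have : (x - y) i = x i - y i := rfl
        rw [this, abs_le]
        constructor <;> linarith [hxi.1, hxi.2, hyi.1, hyi.2]
      calc ‖(x - y) i‖ ^ 2 = |(x - y) i| ^ 2 := rfl
        _ ≤ 1 ^ 2 := by
            apply pow_le_pow_left₀ (abs_nonneg _) this
        _ = 1 := one_pow 2
    calc Real.sqrt (∑ i, ‖(x - y) i‖ ^ 2) ≤ Real.sqrt (∑ _i : Fin K, (1:ℝ)) := by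
          apply Real.sqrt_le_sqrt
          exact Finset.sum_le_sum fun i _ => hb i
      _ = Real.sqrt K := by simp
  have hGpos : 0 < (α + Lf * Real.sqrt K) / α :=
    div_pos (by nlinarith) hα
  constructor
  · intro x hx hgx
    have h1 := hopt x hx
    rw [hh x, hh x'] at h1
    have hmx : max 0 (g x) = 0 := max_eq_left hgx
    have hmx' : 0 ≤ max 0 (g x') := le_max_left _ _
    nlinarith
  · obtain ⟨y, hy, hgy⟩ := hfeas
    have h1 := hopt y hy
    rw [hh y, hh x'] at h1
    have hmy : max 0 (g y) = 0 := max_eq_left hgy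
    have hfb : f y - Lf * Real.sqrt K ≤ f x' := by
      have hl := hLip x' hx' y hy
      have hd := hdiam x' hx' y hy
      have habs : |f x' - f y| ≤ Lf * Real.sqrt K :=
        le_trans hl (mul_le_mul_of_nonneg_left hd hLf)
      have := (abs_le.mp habs).1
      linarith
    rw [hmy] at h1
    have h2 : ((α + Lf * Real.sqrt K) / α) * max 0 (g x') ≤ α + Lf * Real.sqrt K := by
      linarith
    have h3 : max 0 (g x') ≤ α := by
      have h4 : ((α + Lf * Real.sqrt K) / α) * max 0 (g x')
          ≤ ((α + Lf * Real.sqrt K) / α) * α := by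
        rw [div_mul_cancel₀ _ (ne_of_gt hα)]
        exact h2
      exact le_of_mul_le_mul_left h4 hGpos
    exact le_trans (le_max_right 0 (g x')) h3
end

section
/- (Frank–Wolfe with approximate linear oracle, convergence) Let C ⊂ ℝ^K be a compact convex set and h : C → ℝ convex and differentiable with curvature constant C_h. Consider iterates y⁽⁰⁾ ∈ C and, for t ≥ 0 with γ_t = 2/(t+2), any s_t ∈ C satisfying ⟨s_t, ∇h(y⁽ᵗ⁾)⟩ ≤ min_{s ∈ C} ⟨s, ∇h(y⁽ᵗ⁾)⟩ + (1/2)·ρ·γ_t·C_h, and y⁽ᵗ⁺¹⁾ = (1 − γ_t)·y⁽ᵗ⁾ + γ_t·s_t. Then for all t ≥ 1, h(y⁽ᵗ⁾) − min_{y ∈ C} h(y) ≤ (2·C_h/(t+2))·(1 + ρ). -/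
open RealInnerProductSpace

/-- Gradient inequality for a convex differentiable function:
`h x + ⟪c - x, g⟫ ≤ h c`. -/
lemma stmt_8_grad_ineq {K : ℕ} (h : EuclideanSpace ℝ (Fin K) → ℝ)
    (hconv : ConvexOn ℝ Set.univ h) (x c g : EuclideanSpace ℝ (Fin K))
    (hg : HasGradientAt h g x) : h x + ⟪c - x, g⟫ ≤ h c := by
  set L : ℝ → EuclideanSpace ℝ (Fin K) := fun t => t • (c - x) + x with hL
  have hφconv : ConvexOn ℝ Set.univ (h ∘ L) := by
    have := hconv.comp_affineMap
      ((LinearMap.toAffineMap (LinearMap.toSpanSingleton ℝ _ (c - x))) +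
        AffineMap.const ℝ ℝ x)
    have hfun : (⇑((LinearMap.toSpanSingleton ℝ (EuclideanSpace ℝ (Fin K)) (c - x)).toAffineMap +
        AffineMap.const ℝ ℝ x)) = L := by
      funext t
      simp [hL, LinearMap.toSpanSingleton_apply]
    rw [hfun, Set.preimage_univ] at this
    exact this
  have hLd : HasDerivAt L (c - x) 0 := by
    simpa [hL] using ((hasDerivAt_id (0:ℝ)).smul_const (c - x)).add_const x
  have hxL : L 0 = x := by simp [hL]
  have hF : HasFDerivAt h (InnerProductSpace.toDual ℝ _ g) (L 0) := by
    rw [hxL]; exact hg.hasFDerivAt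
  have hφd : HasDerivAt (h ∘ L) (⟪c - x, g⟫) 0 := by
    have h2 : ⟪c - x, g⟫ = (InnerProductSpace.toDual ℝ _ g) (c - x) := by
      rw [InnerProductSpace.toDual_apply_apply]; exact real_inner_comm _ _
    rw [h2]; exact hF.comp_hasDerivAt 0 hLd
  have := hφconv.le_slope_of_hasDerivAt (Set.mem_univ 0) (Set.mem_univ 1)
    zero_lt_one hφd
  have hslope : slope (h ∘ L) 0 1 = h c - h x := by
    have hL1 : L 1 = c := by simp [hL]
    rw [slope_def_field]; simp [Function.comp, hL1, hxL]
  rw [hslope] at this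
  linarith

/-- Frank–Wolfe with an approximate linear oracle: primal convergence
`h(y⁽ᵗ⁾) − min_C h ≤ (2·C_h/(t+2))·(1+ρ)` for all `t ≥ 1`. -/
theorem stmt_8 (K : ℕ) (hK : 0 < K)
    (C : Set (EuclideanSpace ℝ (Fin K)))
    (hCc : IsCompact C) (hCv : Convex ℝ C) (hCne : C.Nonempty)
    (h : EuclideanSpace ℝ (Fin K) → ℝ)
    (h' : EuclideanSpace ℝ (Fin K) → EuclideanSpace ℝ (Fin K))
    (hconv : ConvexOn ℝ Set.univ h)
    (hgrad : ∀ x, HasGradientAt h (h' x) x)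
    (Ch ρ : ℝ) (hCh : 0 ≤ Ch) (hρ : 0 ≤ ρ)
    -- `Ch` is (an upper bound on) the curvature constant of `h` over `C`
    (hcurv : ∀ x ∈ C, ∀ s ∈ C, ∀ γ ∈ Set.Ioc (0:ℝ) 1,
      h (x + γ • (s - x)) - h x - ⟪(x + γ • (s - x)) - x, h' x⟫ ≤
        γ ^ 2 / 2 * Ch)
    (y s : ℕ → EuclideanSpace ℝ (Fin K))
    (hy0 : y 0 ∈ C)
    (hsC : ∀ t, s t ∈ C)
    -- approximate linear oracle with tolerance `(1/2)·ρ·γ_t·C_h`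
    (horacle : ∀ t, ∀ c ∈ C,
      ⟪s t, h' (y t)⟫ ≤ ⟪c, h' (y t)⟫ + (1 / 2) * ρ * (2 / ((t : ℝ) + 2)) * Ch)
    (hstep : ∀ t, y (t + 1) =
      (1 - 2 / ((t : ℝ) + 2)) • y t + (2 / ((t : ℝ) + 2)) • s t) :
    ∀ t : ℕ, 1 ≤ t → ∀ c ∈ C,
      h (y t) - h c ≤ (2 * Ch / ((t : ℝ) + 2)) * (1 + ρ) := by
  -- basic facts about the step size
  have hγpos : ∀ t : ℕ, (0:ℝ) < 2 / ((t : ℝ) + 2) := by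
    intro t; positivity
  have hγle : ∀ t : ℕ, 2 / ((t : ℝ) + 2) ≤ 1 := by
    intro t
    rw [div_le_one (by positivity)]
    have : (0:ℝ) ≤ (t : ℝ) := Nat.cast_nonneg t
    linarith
  -- iterates stay in `C`
  have hyC : ∀ t, y t ∈ C := by
    intro t
    induction t with
    | zero => exact hy0
    | succ t ih =>
      rw [hstep t]
      exact hCv ih (hsC t) (by linarith [hγle t, hγpos t]) (hγpos t).le
        (by ring)
  -- one-step recursion
  have hrec : ∀ t : ℕ, ∀ c ∈ C,
      h (y (t + 1)) - h c ≤ (1 - 2 / ((t:ℝ) + 2)) * (h (y t) - h c) +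
        (2 / ((t:ℝ) + 2)) ^ 2 / 2 * Ch * (1 + ρ) := by
    intro t c hc
    set γ : ℝ := 2 / ((t:ℝ) + 2) with hγ
    have hy1 : y (t + 1) = y t + γ • (s t - y t) := by
      rw [hstep t, smul_sub, sub_smul, one_smul]
      abel
    have hcurv' := hcurv (y t) (hyC t) (s t) (hsC t) γ ⟨hγpos t, hγle t⟩
    have hinner : ⟪(y t + γ • (s t - y t)) - y t, h' (y t)⟫ =
        γ * (⟪s t, h' (y t)⟫ - ⟪y t, h' (y t)⟫) := by
      rw [add_sub_cancel_left, real_inner_smul_left, inner_sub_left]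
    have horc := horacle t c hc
    have hgi := stmt_8_grad_ineq h hconv (y t) c (h' (y t)) (hgrad (y t))
    rw [inner_sub_left] at hgi
    rw [hinner] at hcurv'
    rw [hy1]
    have hγnn : (0:ℝ) ≤ γ := (hγpos t).le
    nlinarith [mul_le_mul_of_nonneg_left horc hγnn,
      mul_le_mul_of_nonneg_left hgi hγnn]
  -- main induction
  intro t ht c hc
  induction t with
  | zero => omega
  | succ t ih =>
    rcases Nat.eq_or_lt_of_le ht with h1 | h1
    · -- base case t + 1 = 1, i.e. t = 0
      have ht0 : t = 0 := by omega
      subst ht0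
      have := hrec 0 c hc
      norm_num at this ⊢
      have h00 : h (y 0) - h c ≥ -((1:ℝ)/2 * Ch * (1+ρ)) ∨ True := Or.inr trivial
      nlinarith [this]
    · -- inductive step: t ≥ 1
      have ht' : 1 ≤ t := by omega
      have ih' := ih ht'
      have hr := hrec t c hc
      have hcast : ((t:ℝ) + 1) + 2 = (t:ℝ) + 3 := by ring
      push_cast
      rw [hcast]
      have ht2 : (0:ℝ) < (t:ℝ) + 2 := by positivity
      have ht3 : (0:ℝ) < (t:ℝ) + 3 := by positivity
      have key : (1 - 2 / ((t:ℝ) + 2)) * (2 * Ch / ((t:ℝ) + 2) * (1 + ρ)) +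
          (2 / ((t:ℝ) + 2)) ^ 2 / 2 * Ch * (1 + ρ) ≤
          2 * Ch / ((t:ℝ) + 3) * (1 + ρ) := by
        have keq : (1 - 2 / ((t:ℝ) + 2)) * (2 * Ch / ((t:ℝ) + 2) * (1 + ρ)) +
            (2 / ((t:ℝ) + 2)) ^ 2 / 2 * Ch * (1 + ρ) =
            (2 * Ch * (1 + ρ)) * (((t:ℝ) + 1) / ((t:ℝ) + 2) ^ 2) := by
          field_simp
          ring
        rw [keq]
        have hfrac : ((t:ℝ) + 1) / ((t:ℝ) + 2) ^ 2 ≤ 1 / ((t:ℝ) + 3) := by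
          rw [div_le_div_iff₀ (by positivity) ht3]
          nlinarith [Nat.cast_nonneg t (α := ℝ)]
        have heq2 : 2 * Ch / ((t:ℝ) + 3) * (1 + ρ) =
            (2 * Ch * (1 + ρ)) * (1 / ((t:ℝ) + 3)) := by ring
        rw [heq2]
        exact mul_le_mul_of_nonneg_left hfrac (by positivity)
      have hmono : (1 - 2 / ((t:ℝ) + 2)) * (h (y t) - h c) ≤
          (1 - 2 / ((t:ℝ) + 2)) * (2 * Ch / ((t:ℝ) + 2) * (1 + ρ)) := by
        apply mul_le_mul_of_nonneg_left _ (by linarith [hγle t])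
        exact ih'
      linarith
end

section
/- Let C be a nonempty finite set, ε > 0, and h : C → ℝ a score function. Let M be the exponential mechanism that outputs c ∈ C with probability proportional to exp(−ε·h(c)/(2Δ)). If h' : C → ℝ satisfies |h(c) − h'(c)| ≤ Δ for all c ∈ C, and M' is the corresponding mechanism for h', then for every c ∈ C, P[M = c] ≤ e^{ε}·P[M' = c]. -/
open Finset

/-- Privacy of the exponential mechanism: if scores `h` and `h'` differ
pointwise by at most `Δ`, the output distributions are within an `e^ε`
multiplicative factor. -/
theorem stmt_12 (C : Type*) [Fintype C] [Nonempty C]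
    (ε Δ : ℝ) (hε : 0 < ε) (hΔ : 0 < Δ)
    (h h' : C → ℝ)
    (hsens : ∀ c : C, |h c - h' c| ≤ Δ)
    (p p' : C → ℝ)
    (hp : ∀ c, p c = Real.exp (-ε * h c / (2 * Δ)) /
      ∑ c' : C, Real.exp (-ε * h c' / (2 * Δ)))
    (hp' : ∀ c, p' c = Real.exp (-ε * h' c / (2 * Δ)) /
      ∑ c' : C, Real.exp (-ε * h' c' / (2 * Δ))) :
    ∀ c : C, p c ≤ Real.exp ε * p' c := by
  have key : ∀ a b : ℝ, b - a ≤ Δ →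
      Real.exp (-ε * a / (2 * Δ)) ≤ Real.exp (ε / 2) * Real.exp (-ε * b / (2 * Δ)) := by
    intro a b hab
    rw [← Real.exp_add]
    apply Real.exp_le_exp.2
    have h1 : -ε * a ≤ ε * Δ + -ε * b := by nlinarith
    have h2 : -ε * a / (2 * Δ) ≤ (ε * Δ + -ε * b) / (2 * Δ) := by
      gcongr
    calc -ε * a / (2 * Δ) ≤ (ε * Δ + -ε * b) / (2 * Δ) := h2
      _ = ε / 2 + -ε * b / (2 * Δ) := by field_simp
  intro c
  have hS : (0:ℝ) < ∑ c' : C, Real.exp (-ε * h c' / (2 * Δ)) :=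
    Finset.sum_pos (fun i _ => Real.exp_pos _) Finset.univ_nonempty
  have hS' : (0:ℝ) < ∑ c' : C, Real.exp (-ε * h' c' / (2 * Δ)) :=
    Finset.sum_pos (fun i _ => Real.exp_pos _) Finset.univ_nonempty
  have hnum : Real.exp (-ε * h c / (2 * Δ)) ≤
      Real.exp (ε / 2) * Real.exp (-ε * h' c / (2 * Δ)) :=
    key _ _ (by have := abs_le.1 (hsens c); linarith [this.1])
  have hden : ∑ c' : C, Real.exp (-ε * h' c' / (2 * Δ)) ≤
      Real.exp (ε / 2) * ∑ c' : C, Real.exp (-ε * h c' / (2 * Δ)) := by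
    rw [Finset.mul_sum]
    refine Finset.sum_le_sum fun i _ => key _ _ ?_
    have := abs_le.1 (hsens i); linarith [this.2]
  rw [hp, hp']
  rw [div_le_iff₀ hS,
    show Real.exp ε * (Real.exp (-ε * h' c / (2 * Δ)) /
        ∑ c' : C, Real.exp (-ε * h' c' / (2 * Δ))) *
        (∑ c' : C, Real.exp (-ε * h c' / (2 * Δ))) =
      Real.exp ε * Real.exp (-ε * h' c / (2 * Δ)) *
        (∑ c' : C, Real.exp (-ε * h c' / (2 * Δ))) /
        ∑ c' : C, Real.exp (-ε * h' c' / (2 * Δ)) by ring,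
    le_div_iff₀ hS']
  calc Real.exp (-ε * h c / (2 * Δ)) * ∑ c' : C, Real.exp (-ε * h' c' / (2 * Δ))
      ≤ (Real.exp (ε / 2) * Real.exp (-ε * h' c / (2 * Δ))) *
        (Real.exp (ε / 2) * ∑ c' : C, Real.exp (-ε * h c' / (2 * Δ))) :=
        mul_le_mul hnum hden hS'.le (by positivity)
    _ = Real.exp ε * Real.exp (-ε * h' c / (2 * Δ)) *
        ∑ c' : C, Real.exp (-ε * h c' / (2 * Δ)) := by
        rw [show Real.exp ε = Real.exp (ε/2) * Real.exp (ε/2) by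
          rw [← Real.exp_add]; ring_nf]
        ring
end

section
/- Let C be a nonempty finite set, ε > 0, ρ ∈ (0,1), and h : C → ℝ with sensitivity proxy Δ > 0. Let c̃ be sampled with probability proportional to exp(−ε·h(c)/(2Δ)) and let c* minimize h over C. Then with probability at least 1 − ρ, h(c̃) − h(c*) ≤ (2Δ/ε)·log(|C|/ρ). -/
open Finset

/-- Utility of the exponential mechanism: the probability that the sampled
score exceeds the optimum by more than `(2Δ/ε)·log(|C|/ρ)` is at most `ρ`. -/
theorem stmt_13 (C : Type*) [Fintype C] [Nonempty C]
    (ε Δ ρ : ℝ) (hε : 0 < ε) (hΔ : 0 < Δ) (hρ : ρ ∈ Set.Ioo (0:ℝ) 1)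
    (h : C → ℝ)
    (p : C → ℝ)
    (hp : ∀ c, p c = Real.exp (-ε * h c / (2 * Δ)) /
      ∑ c' : C, Real.exp (-ε * h c' / (2 * Δ)))
    (cstar : C) (hcstar : ∀ c : C, h cstar ≤ h c) :
    ∑ c ∈ Finset.univ.filter
        (fun c : C => (2 * Δ / ε) * Real.log ((Fintype.card C : ℝ) / ρ) <
          h c - h cstar),
      p c ≤ ρ := by
  obtain ⟨hρ0, hρ1⟩ := hρ
  set S : ℝ := ∑ c' : C, Real.exp (-ε * h c' / (2 * Δ)) with hS
  set t : ℝ := (2 * Δ / ε) * Real.log ((Fintype.card C : ℝ) / ρ) with ht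
  have hN : (0:ℝ) < (Fintype.card C : ℝ) := by
    exact_mod_cast Fintype.card_pos
  have hSpos : 0 < S := Finset.sum_pos (fun c _ => Real.exp_pos _) ⟨cstar, mem_univ _⟩
  have hSlb : Real.exp (-ε * h cstar / (2 * Δ)) ≤ S :=
    Finset.single_le_sum (f := fun c' => Real.exp (-ε * h c' / (2 * Δ)))
      (fun c _ => (Real.exp_pos _).le) (mem_univ cstar)
  have h2Δ : (0:ℝ) < 2 * Δ := by linarith
  have htval : ε * t / (2 * Δ) = Real.log ((Fintype.card C : ℝ) / ρ) := by
    field_simp [ht]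
    rw [ht]; field_simp
  have key : ∀ c : C, t < h c - h cstar → p c ≤ ρ / (Fintype.card C : ℝ) := by
    intro c hc
    rw [hp c]
    have h1 : Real.exp (-ε * h c / (2 * Δ)) ≤
        Real.exp (-ε * h cstar / (2 * Δ)) * Real.exp (-(ε * t / (2 * Δ))) := by
      rw [← Real.exp_add]
      apply Real.exp_le_exp.mpr
      rw [show -(ε * t / (2 * Δ)) = -(ε * t) / (2 * Δ) by ring, ← add_div,
        div_le_div_iff₀ h2Δ h2Δ]
      nlinarith [mul_pos (mul_pos hε (sub_pos.mpr hc)) h2Δ]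
    have h2 : Real.exp (-(ε * t / (2 * Δ))) = ρ / (Fintype.card C : ℝ) := by
      rw [htval, Real.exp_neg, Real.exp_log (by positivity)]
      rw [inv_div]
    calc Real.exp (-ε * h c / (2 * Δ)) / S
        ≤ Real.exp (-ε * h cstar / (2 * Δ)) * Real.exp (-(ε * t / (2 * Δ))) / S := by
          exact div_le_div_of_nonneg_right h1 hSpos.le
      _ ≤ S * Real.exp (-(ε * t / (2 * Δ))) / S := by
          apply div_le_div_of_nonneg_right _ hSpos.le
          exact mul_le_mul_of_nonneg_right hSlb (Real.exp_pos _).le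
      _ = Real.exp (-(ε * t / (2 * Δ))) := by field_simp
      _ = ρ / (Fintype.card C : ℝ) := h2
  calc ∑ c ∈ Finset.univ.filter (fun c : C => t < h c - h cstar), p c
      ≤ ∑ c ∈ Finset.univ.filter (fun c : C => t < h c - h cstar),
          ρ / (Fintype.card C : ℝ) := by
        apply Finset.sum_le_sum
        intro c hc
        exact key c (mem_filter.mp hc).2
    _ = (Finset.univ.filter (fun c : C => t < h c - h cstar)).card *
          (ρ / (Fintype.card C : ℝ)) := by rw [Finset.sum_const, nsmul_eq_mul]
    _ ≤ (Fintype.card C : ℝ) * (ρ / (Fintype.card C : ℝ)) := by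
        apply mul_le_mul_of_nonneg_right _ (by positivity)
        exact_mod_cast Finset.card_filter_le _ _
    _ = ρ := by field_simp
end
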